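/- There exists a sequence of directed rooted trees on n nodes under which the dissemination time is at least ⌈(3n−1)/2⌉ − 2; hence the worst-case dissemination time over rooted trees satisfies B ≥ ⌈(3n−1)/2⌉ − 2. -/

import Mathlib

/-- Influence sets: `influence G p r` is the set of processes that know
about `p` at the end of round `r`, where `G r` is the round-`r`
communication graph (edges `G r q q'` mean `q` sends to `q'`). -/
def influence {n : ℕ} (G : ℕ → Fin n → Fin n → Prop) (p : Fin n) : ℕ → Set (Fin n)
  | 0 => {p}
  | r + 1 => influence G p r ∪ {q' | ∃ q ∈ influence G p r, G (r + 1) q q'}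

/-- `E` is a directed tree on `Fin n` rooted at `root`, edges oriented away
from the root: every node is reachable from the root, every non-root node
has a unique parent, and the root has no parent. -/
def IsRootedTree {n : ℕ} (E : Fin n → Fin n → Prop) (root : Fin n) : Prop :=
  (∀ v, Relation.ReflTransGen E root v) ∧
  (∀ v, v ≠ root → ∃! u, E u v) ∧
  (∀ u, ¬ E u root)

/-- A leaf of a directed graph: a node with no outgoing edge. -/
def IsLeaf {n : ℕ} (E : Fin n → Fin n → Prop) (v : Fin n) : Prop := ∀ w, ¬ E v w

/-- The successor relation of the chain `σ 0 → σ 1 → ⋯ → σ (n-1)`. -/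
def chainEdge {n : ℕ} (σ : Fin n ≃ Fin n) (u v : Fin n) : Prop :=
  ∃ i j : Fin n, (j : ℕ) = (i : ℕ) + 1 ∧ u = σ i ∧ v = σ j

/-- `E` is a directed chain (rooted path) on all `n` nodes. -/
def IsDirChain {n : ℕ} (E : Fin n → Fin n → Prop) : Prop :=
  ∃ σ : Fin n ≃ Fin n, ∀ u v, E u v ↔ chainEdge σ u v

/-- `E` is an undirected path on all `n` nodes (messages traverse edges in
both directions). -/
def IsUndirPath {n : ℕ} (E : Fin n → Fin n → Prop) : Prop :=
  ∃ σ : Fin n ≃ Fin n, ∀ u v, E u v ↔ (chainEdge σ u v ∨ chainEdge σ v u)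

/-- The influence sets indexed by `I` cover `Π` at time `r`. -/
def isCovering {n : ℕ} (G : ℕ → Fin n → Fin n → Prop) (I : Set (Fin n)) (r : ℕ) : Prop :=
  ⋃ p ∈ I, influence G p r = Set.univ

/-- A strict covering: no member can be removed. -/
def isStrictCovering {n : ℕ} (G : ℕ → Fin n → Fin n → Prop) (I : Set (Fin n)) (r : ℕ) : Prop :=
  isCovering G I r ∧ ∀ p ∈ I, ¬ isCovering G (I \ {p}) r

/-! ### Auxiliary definitions for the witness construction -/

/-- Phase-1 graph: the chain `0 → 1 → ⋯ → n-1`. -/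
def chainRel (n : ℕ) (u v : Fin n) : Prop := (v : ℕ) = (u : ℕ) + 1

/-- Phase-2 graph: two-branch tree rooted at `n-1`:
`n-1 → n-2 → ⋯ → n/2` and `n-1 → 0 → 1 → ⋯ → n/2-1`. -/
def treeRel (n : ℕ) (u v : Fin n) : Prop :=
  ((u : ℕ) = (v : ℕ) + 1 ∧ n / 2 ≤ (v : ℕ)) ∨
  ((u : ℕ) = n - 1 ∧ (v : ℕ) = 0) ∨
  ((v : ℕ) = (u : ℕ) + 1 ∧ (v : ℕ) + 1 ≤ n / 2)

/-- Phase-3 graph: the rotated chain `n/2-1 → n/2 → ⋯ → n-1 → 0 → ⋯ → n/2-2`. -/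
def chain3Rel (n : ℕ) (u v : Fin n) : Prop :=
  ((v : ℕ) = (u : ℕ) + 1 ∧ (v : ℕ) ≠ n / 2 - 1) ∨
  ((u : ℕ) = n - 1 ∧ (v : ℕ) = 0 ∧ n / 2 - 1 ≠ 0)

/-- The adversarial sequence of trees. -/
def myG (n : ℕ) (r : ℕ) (u v : Fin n) : Prop :=
  (r ≤ (n - 1) / 2 ∧ chainRel n u v) ∨
  ((n - 1) / 2 < r ∧ r ≤ n - 2 ∧ treeRel n u v) ∨
  (n - 2 < r ∧ chain3Rel n u v)

/-- Over-approximation of the influence set of `p` at time `r`. -/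
def myInv (n r pv vv : ℕ) : Prop :=
  (r ≤ (n - 1) / 2 ∧ pv ≤ vv ∧ vv ≤ pv + r) ∨
  ((n - 1) / 2 < r ∧ r ≤ n - 2 ∧
    ((pv ≤ n / 2 - 1 ∧ pv ≤ vv ∧ vv ≤ pv + (n - 1) / 2) ∨
     (n / 2 - 1 < pv ∧
       ((n / 2 ≤ vv ∧ pv ≤ vv + (r - (n - 1) / 2)) ∨ vv + 1 ≤ r - (n - 1) / 2)))) ∨
  (n - 2 < r ∧
    ((pv ≤ n / 2 - 1 ∧
       ((pv ≤ vv ∧ vv ≤ pv + (n - 1) / 2 + (r - (n - 2))) ∨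
        vv + n ≤ (r - (n - 2)) + (n - 1) / 2 + pv)) ∨
     (n / 2 - 1 < pv ∧ ((n / 2 ≤ vv ∧ pv ≤ vv + (n / 2 - 1)) ∨ vv + 1 ≤ n / 2 - 1))))

lemma myInv_mono (n r pv vv : ℕ) (h : myInv n r pv vv) : myInv n (r + 1) pv vv := by
  unfold myInv at *; omega

lemma myInv_closed (n r pv : ℕ) (u v : Fin n) (h : myInv n r pv (u : ℕ))
    (he : myG n (r + 1) u v) : myInv n (r + 1) pv (v : ℕ) := by
  have hu := u.isLt; have hv := v.isLt
  unfold myInv myG chainRel treeRel chain3Rel at *; omega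

lemma influence_mono {n : ℕ} (G : ℕ → Fin n → Fin n → Prop) (p : Fin n) :
    ∀ {r s : ℕ}, r ≤ s → influence G p r ⊆ influence G p s := by
  intro r s h
  induction s with
  | zero =>
    have : r = 0 := Nat.le_zero.mp h
    subst this; exact fun _ hx => hx
  | succ s ih =>
    by_cases h2 : r ≤ s
    · have hstep : influence G p s ⊆ influence G p (s + 1) := Set.subset_union_left
      exact (ih h2).trans hstep
    · have : r = s + 1 := by omega
      subst this; exact fun _ hx => hx

lemma influence_inv (n : ℕ) (p : Fin n) :
    ∀ r, ∀ v ∈ influence (myG n) p r, myInv n r (p : ℕ) (v : ℕ) := by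
  intro r
  induction r with
  | zero =>
    intro v hv
    have h : v = p := hv
    subst h
    unfold myInv; omega
  | succ r ih =>
    intro v hv
    have hv' : v ∈ influence (myG n) p r ∪
        {q' | ∃ q ∈ influence (myG n) p r, myG n (r + 1) q q'} := hv
    rcases hv' with h | h
    · exact myInv_mono n r _ _ (ih v h)
    · obtain ⟨q, hq, he⟩ := h
      exact myInv_closed n r _ q v (ih q hq) he

lemma isRootedTree_congr {n : ℕ} {E E' : Fin n → Fin n → Prop}
    (h : ∀ u v, E u v ↔ E' u v) {root : Fin n}
    (hE : IsRootedTree E root) : IsRootedTree E' root := by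
  obtain ⟨h1, h2, h3⟩ := hE
  refine ⟨fun v => Relation.ReflTransGen.mono (fun a b hab => (h a b).mp hab) _ _ (h1 v),
    fun v hv => ?_, fun u hu => h3 u ((h u root).mpr hu)⟩
  obtain ⟨u, hu, huniq⟩ := h2 v hv
  exact ⟨u, (h u v).mp hu, fun y hy => huniq y ((h y v).mpr hy)⟩

lemma chain_tree (n : ℕ) (hn : 1 ≤ n) : IsRootedTree (chainRel n) ⟨0, hn⟩ := by
  refine ⟨?_, ?_, ?_⟩
  · have aux : ∀ m (hm : m < n), Relation.ReflTransGen (chainRel n) ⟨0, hn⟩ ⟨m, hm⟩ := by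
      intro m
      induction m with
      | zero => intro hm; exact Relation.ReflTransGen.refl
      | succ m ih =>
        intro hm
        exact Relation.ReflTransGen.tail (ih (by omega)) rfl
    intro v
    exact aux (v : ℕ) v.isLt
  · intro v hv
    have hv' : (v : ℕ) ≠ 0 := fun h => hv (Fin.ext h)
    refine ⟨⟨(v : ℕ) - 1, by omega⟩, show (v : ℕ) = (v : ℕ) - 1 + 1 by omega, ?_⟩
    intro y hy
    have hy' : (v : ℕ) = (y : ℕ) + 1 := hy
    exact Fin.ext (show (y : ℕ) = (v : ℕ) - 1 by omega)
  · intro u hu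
    have hu' : (0 : ℕ) = (u : ℕ) + 1 := hu
    omega

lemma tree2_tree (n : ℕ) (hn : 4 ≤ n) :
    IsRootedTree (treeRel n) ⟨n - 1, by omega⟩ := by
  refine ⟨?_, ?_, ?_⟩
  · have hdown : ∀ d (hd : n / 2 + d ≤ n - 1),
        Relation.ReflTransGen (treeRel n) ⟨n - 1, by omega⟩ ⟨n - 1 - d, by omega⟩ := by
      intro d
      induction d with
      | zero => intro hd; exact Relation.ReflTransGen.refl
      | succ d ih =>
        intro hd
        refine Relation.ReflTransGen.tail (ih (by omega)) (Or.inl ⟨?_, ?_⟩)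
        · show n - 1 - d = n - 1 - (d + 1) + 1; omega
        · show n / 2 ≤ n - 1 - (d + 1); omega
    have hzero : Relation.ReflTransGen (treeRel n) ⟨n - 1, by omega⟩ ⟨0, by omega⟩ :=
      Relation.ReflTransGen.single (Or.inr (Or.inl ⟨rfl, rfl⟩))
    have hlowt : ∀ j (hj : j + 1 ≤ n / 2),
        Relation.ReflTransGen (treeRel n) ⟨n - 1, by omega⟩ ⟨j, by omega⟩ := by
      intro j
      induction j with
      | zero => intro _; exact hzero
      | succ j ih =>
        intro hj
        exact Relation.ReflTransGen.tail (ih (by omega)) (Or.inr (Or.inr ⟨rfl, hj⟩))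
    intro v
    rcases le_or_gt (n / 2) (v : ℕ) with h | h
    · have hv : v = ⟨n - 1 - (n - 1 - (v : ℕ)), by omega⟩ := Fin.ext (by simp; omega)
      rw [hv]
      exact hdown _ (by omega)
    · exact hlowt (v : ℕ) (by omega)
  · intro v hv
    have hv' : (v : ℕ) ≠ n - 1 := fun h => hv (Fin.ext h)
    by_cases h0 : (v : ℕ) = 0
    · refine ⟨⟨n - 1, by omega⟩, Or.inr (Or.inl ⟨rfl, h0⟩), ?_⟩
      intro y hy
      rcases hy with ⟨h1, h2⟩ | ⟨h1, h2⟩ | ⟨h1, h2⟩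
      · omega
      · exact Fin.ext (show (y : ℕ) = n - 1 by omega)
      · omega
    · rcases le_or_gt (n / 2) (v : ℕ) with h | h
      · refine ⟨⟨(v : ℕ) + 1, by omega⟩, Or.inl ⟨rfl, h⟩, ?_⟩
        intro y hy
        rcases hy with ⟨h1, h2⟩ | ⟨h1, h2⟩ | ⟨h1, h2⟩
        · exact Fin.ext (show (y : ℕ) = (v : ℕ) + 1 by omega)
        · omega
        · omega
      · refine ⟨⟨(v : ℕ) - 1, by omega⟩, Or.inr (Or.inr ⟨show (v : ℕ) = (v : ℕ) - 1 + 1 by omega, by omega⟩), ?_⟩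
        intro y hy
        rcases hy with ⟨h1, h2⟩ | ⟨h1, h2⟩ | ⟨h1, h2⟩
        · omega
        · omega
        · exact Fin.ext (show (y : ℕ) = (v : ℕ) - 1 by omega)
  · intro u hu
    have hlt := u.isLt
    rcases hu with ⟨h1, h2⟩ | ⟨h1, h2⟩ | ⟨h1, h2⟩
    · have : (u : ℕ) = n - 1 + 1 := h1
      omega
    · have : (n - 1 : ℕ) = 0 := h2
      omega
    · have h1' : (n - 1 : ℕ) = (u : ℕ) + 1 := h1
      have h2' : (n - 1 : ℕ) + 1 ≤ n / 2 := h2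
      omega

lemma chain3_tree (n : ℕ) (hn : 1 ≤ n) :
    IsRootedTree (chain3Rel n) ⟨n / 2 - 1, by omega⟩ := by
  refine ⟨?_, ?_, ?_⟩
  · have hup : ∀ d (hd : n / 2 - 1 + d < n),
        Relation.ReflTransGen (chain3Rel n) ⟨n / 2 - 1, by omega⟩ ⟨n / 2 - 1 + d, hd⟩ := by
      intro d
      induction d with
      | zero => intro hd; exact Relation.ReflTransGen.refl
      | succ d ih =>
        intro hd
        refine Relation.ReflTransGen.tail (ih (by omega)) (Or.inl ⟨?_, ?_⟩)
        · show n / 2 - 1 + (d + 1) = n / 2 - 1 + d + 1; omega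
        · show n / 2 - 1 + (d + 1) ≠ n / 2 - 1; omega
    have hzero : n / 2 - 1 ≠ 0 →
        Relation.ReflTransGen (chain3Rel n) ⟨n / 2 - 1, by omega⟩ ⟨0, by omega⟩ := by
      intro hc
      refine Relation.ReflTransGen.tail (hup (n - 1 - (n / 2 - 1)) (by omega))
        (Or.inr ⟨?_, rfl, hc⟩)
      show n / 2 - 1 + (n - 1 - (n / 2 - 1)) = n - 1; omega
    have hlow : ∀ j (hj : j < n / 2 - 1),
        Relation.ReflTransGen (chain3Rel n) ⟨n / 2 - 1, by omega⟩ ⟨j, by omega⟩ := by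
      intro j
      induction j with
      | zero => intro hj; exact hzero (by omega)
      | succ j ih =>
        intro hj
        refine Relation.ReflTransGen.tail (ih (by omega)) (Or.inl ⟨rfl, ?_⟩)
        show j + 1 ≠ n / 2 - 1; omega
    intro v
    rcases le_or_gt (n / 2 - 1) (v : ℕ) with h | h
    · have hv : v = ⟨n / 2 - 1 + ((v : ℕ) - (n / 2 - 1)), by omega⟩ := Fin.ext (by simp; omega)
      rw [hv]
      exact hup _ _
    · exact hlow (v : ℕ) h
  · intro v hv
    have hv' : (v : ℕ) ≠ n / 2 - 1 := fun h => hv (Fin.ext h)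
    by_cases h0 : (v : ℕ) = 0
    · refine ⟨⟨n - 1, by omega⟩, Or.inr ⟨rfl, h0, by omega⟩, ?_⟩
      intro y hy
      rcases hy with ⟨h1, h2⟩ | ⟨h1, h2, h3⟩
      · omega
      · exact Fin.ext (show (y : ℕ) = n - 1 by omega)
    · refine ⟨⟨(v : ℕ) - 1, by omega⟩, Or.inl ⟨show (v : ℕ) = (v : ℕ) - 1 + 1 by omega, hv'⟩, ?_⟩
      intro y hy
      rcases hy with ⟨h1, h2⟩ | ⟨h1, h2, h3⟩
      · exact Fin.ext (show (y : ℕ) = (v : ℕ) - 1 by omega)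
      · exact absurd h2 h0
  · intro u hu
    have hlt := u.isLt
    rcases hu with ⟨h1, h2⟩ | ⟨h1, h2, h3⟩
    · exact h2 rfl
    · exact h3 h2

/-- there is a sequence of rooted trees on `n` nodes under
which no influence set is all of `Π` before round `⌈(3n-1)/2⌉ - 2 = 3n/2 - 2`;
hence the worst-case dissemination time over rooted trees is at least
`⌈(3n-1)/2⌉ - 2`. -/
theorem dissemination_trees_lower_bound {n : ℕ} (hn : 1 ≤ n) :
    ∃ G : ℕ → Fin n → Fin n → Prop,
      (∀ r, 1 ≤ r → ∃ root, IsRootedTree (G r) root) ∧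
      ∀ r, r < 3 * n / 2 - 2 → ∀ p : Fin n, influence G p r ≠ Set.univ := by
  refine ⟨myG n, fun r hr => ?_, fun r hr p hEq => ?_⟩
  · rcases Nat.lt_or_ge ((n - 1) / 2) r with h1 | h1
    · rcases Nat.lt_or_ge (n - 2) r with h2 | h2
      · refine ⟨⟨n / 2 - 1, by omega⟩, isRootedTree_congr (fun u v => ?_) (chain3_tree n hn)⟩
        simp only [myG, chainRel, treeRel, chain3Rel]
        omega
      · have hn4 : 4 ≤ n := by omega
        refine ⟨⟨n - 1, by omega⟩, isRootedTree_congr (fun u v => ?_) (tree2_tree n hn4)⟩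
        simp only [myG, chainRel, treeRel, chain3Rel]
        omega
    · refine ⟨⟨0, hn⟩, isRootedTree_congr (fun u v => ?_) (chain_tree n hn)⟩
      simp only [myG, chainRel, treeRel, chain3Rel]
      omega
  · have hn2 : 2 ≤ n := by omega
    have hr0 : r ≤ n - 2 + (n / 2 - 1) := by omega
    have hall : ∀ w : Fin n, myInv n (n - 2 + (n / 2 - 1)) (p : ℕ) (w : ℕ) := by
      intro w
      refine influence_inv n p _ w (influence_mono (myG n) p hr0 ?_)
      rw [hEq]; exact Set.mem_univ w
    have hplt := p.isLt
    by_cases hp0 : (p : ℕ) = 0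
    · have h2 : myInv n (n - 2 + (n / 2 - 1)) (p : ℕ) (n - 1) := hall ⟨n - 1, by omega⟩
      unfold myInv at h2; omega
    · by_cases hpc : (p : ℕ) ≤ n / 2 - 1
      · have h2 : myInv n (n - 2 + (n / 2 - 1)) (p : ℕ) ((p : ℕ) - 1) := hall ⟨(p : ℕ) - 1, by omega⟩
        unfold myInv at h2; omega
      · have h2 : myInv n (n - 2 + (n / 2 - 1)) (p : ℕ) (n / 2 - 1) := hall ⟨n / 2 - 1, by omega⟩
        unfold myInv at h2; omega
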